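/- Let (h_{k,ℓ})_{0≤ℓ<k} be an infinite non-decreasing triangular array of reals and for each n let Φ_n be the second order branching clustering function on 𝕃₀⁽ⁿ⁾ with parameters (h_{k,ℓ})_{0≤ℓ<k≤n+1} and h = h_{n+1,n}. If ∑_k 2^{−k} h_{k,k−1} < ∞, then the free energy ζ(J) = lim_{n→∞} 2^{−n} ln ∑_{A ⊆ 𝕃₀⁽ⁿ⁾} e^{J|A| − Φ_n(A)} exists and is finite for every J ∈ ℝ. -/

import Mathlib

open Filter
open scoped Classical

noncomputable section

namespace PWC

/-- Leaves of the binary tree `𝕋⁽ⁿ⁾` of depth `n`: binary words of length `n`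
(coordinate `0` is the first step away from the root). -/
abbrev Leaf (n : ℕ) := Fin n → Bool

/-- The age (distance from the leaves) of the youngest common ancestor `u ∧ v` of two
leaves: `n` minus the length of their longest common prefix. -/
def meetAge {n : ℕ} (u v : Leaf n) : ℕ :=
  if u = v then 0 else n - sInf {i : ℕ | ∃ h : i < n, u ⟨i, h⟩ ≠ v ⟨i, h⟩}

/-- Canonical representative (as a leaf) of the ancestor of `u` at age `k`:
keep the first `n - k` coordinates and pad by `false`. -/
def trunc {n : ℕ} (k : ℕ) (u : Leaf n) : Leaf n :=
  fun i => if (i : ℕ) < n - k then u i else false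

/-- The branching points `ℬ(A) ∩ 𝕃_k` of `A` of age `k`, encoded by the canonical
representatives of the corresponding ancestors. -/
def branchPts {n : ℕ} (A : Finset (Leaf n)) (k : ℕ) : Finset (Leaf n) :=
  ((A ×ˢ A).filter (fun p => meetAge p.1 p.2 = k)).image (fun p => trunc k p.1)

/-- `b_k(A)`: the number of branching points of `A` of age `k`. -/
def bcount {n : ℕ} (A : Finset (Leaf n)) (k : ℕ) : ℕ := (branchPts A k).card

/-- `b_{k,ℓ}(A)`: the number of branching points of `A` of age `ℓ` whose direct
branching ancestor has age `k`; for `k = n+1` the indicator that the oldest branching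
point of `A` has age `ℓ` (i.e. the branching points at age `ℓ` having no strictly older
branching ancestor). -/
def b2count {n : ℕ} (A : Finset (Leaf n)) (k l : ℕ) : ℕ :=
  if k = n + 1 then
    ((branchPts A l).filter (fun w => ∀ j, l < j → j ≤ n → trunc j w ∉ branchPts A j)).card
  else
    ((branchPts A l).filter (fun w => trunc k w ∈ branchPts A k ∧
      ∀ j, l < j → j < k → trunc j w ∉ branchPts A j)).card

/-- `A ≺ B` : `A` is more clustered than `B`. -/
def MoreClustered {n : ℕ} (A B : Finset (Leaf n)) : Prop :=
  ∃ σ : Leaf n → Leaf n, Set.BijOn σ ↑A ↑B ∧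
    ∀ u ∈ A, ∀ v ∈ A, meetAge u v ≤ meetAge (σ u) (σ v)

/-- `A ∼ B` : the subtrees of `𝕋⁽ⁿ⁾` generated by `A` and `B` are graph-isomorphic,
i.e. there is a bijection of the leaf sets preserving all meet ages. -/
def EquivClustered {n : ℕ} (A B : Finset (Leaf n)) : Prop :=
  ∃ σ : Leaf n → Leaf n, Set.BijOn σ ↑A ↑B ∧
    ∀ u ∈ A, ∀ v ∈ A, meetAge (σ u) (σ v) = meetAge u v

/-- A clustering function: vanishes on `∅` and is invariant under isomorphism of the
generated subtrees. -/
def IsClusteringFn {n : ℕ} (Φ : Finset (Leaf n) → ℝ) : Prop :=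
  Φ ∅ = 0 ∧ ∀ A B : Finset (Leaf n), EquivClustered A B → Φ A = Φ B

/-- A monotone clustering function. -/
def IsMonotoneClusteringFn {n : ℕ} (Φ : Finset (Leaf n) → ℝ) : Prop :=
  IsClusteringFn Φ ∧
    (∀ A B : Finset (Leaf n), MoreClustered A B → Φ A ≤ Φ B) ∧
    (∀ A B : Finset (Leaf n), Disjoint A B → Φ (A ∪ B) ≤ Φ A + Φ B)

/-- The partition function `Z_n^{Φ,J}`. -/
def Z (n : ℕ) (Φ : Finset (Leaf n) → ℝ) (J : ℝ) : ℝ :=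
  ∑ A : Finset (Leaf n), Real.exp (J * (A.card : ℝ) - Φ A)

/-- The finite-volume free energy `ζ_n^Φ(J) = 2⁻ⁿ ln Z_n^{Φ,J}`. -/
def zetaN (n : ℕ) (Φ : Finset (Leaf n) → ℝ) (J : ℝ) : ℝ :=
  Real.log (Z n Φ J) / 2 ^ n

/-- The canonical partition function `W_n^Φ(a₀)`. -/
def W (n : ℕ) (Φ : Finset (Leaf n) → ℝ) (a₀ : ℕ) : ℝ :=
  ∑ A ∈ Finset.univ.filter (fun A : Finset (Leaf n) => A.card = a₀), Real.exp (-Φ A)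

/-- The finite-volume canonical free energy `ω_n^Φ(ε) = 2⁻ⁿ ln W_n^Φ(ε 2ⁿ)` (for a
dyadic `ε ∈ [0,1]` and `n` large, `⌊ε 2ⁿ⌋ = ε 2ⁿ`). -/
def omegaN (n : ℕ) (Φ : Finset (Leaf n) → ℝ) (ε : ℝ) : ℝ :=
  Real.log (W n Φ ⌊ε * 2 ^ n⌋₊) / 2 ^ n

/-- The expected density `ρ_n^Φ(J)` of the dry set under the PWC measure. -/
def rhoN (n : ℕ) (Φ : Finset (Leaf n) → ℝ) (J : ℝ) : ℝ :=
  (∑ A : Finset (Leaf n), (A.card : ℝ) * Real.exp (J * (A.card : ℝ) - Φ A)) /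
    (2 ^ n * Z n Φ J)

/-- A dyadic rational. -/
def IsDyadic (x : ℝ) : Prop := ∃ (k : ℤ) (m : ℕ), x = (k : ℝ) / 2 ^ m

/-- The hypotheses of the general theory (Proposition 1.2): each `Φ_n` (for `n ≥ 1`) is
a monotone, non-negative clustering function, and `Φ_n(A) ≤ Φ_{n-1}(A) + γ_n` for any
`A` contained in the leaf set of one of the two subtrees of `𝕋⁽ⁿ⁾` rooted at a child of
the root (identified with `𝕋⁽ⁿ⁻¹⁾` by prepending the corresponding letter), where
`γ_n ≥ 0` and `∑ γ_n 2⁻ⁿ < ∞`. -/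
structure GoodSeq (Φ : ∀ n, Finset (Fin n → Bool) → ℝ) (γ : ℕ → ℝ) : Prop where
  mono : ∀ n, 1 ≤ n → IsMonotoneClusteringFn (Φ n)
  nonneg : ∀ n, 1 ≤ n → ∀ A, 0 ≤ Φ n A
  gamma_nonneg : ∀ n, 0 ≤ γ n
  gamma_summable : Summable fun n => γ n / 2 ^ n
  subtree : ∀ (n : ℕ) (b : Bool) (A : Finset (Fin n → Bool)),
    Φ (n + 1) (A.image fun u => Fin.cons b u) ≤ Φ n A + γ (n + 1)

/-- The first order branching clustering function with parameters `(h_k)_{k=0}^n`, `h`. -/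
def foPhi (n : ℕ) (hs : ℕ → ℝ) (h : ℝ) (A : Finset (Leaf n)) : ℝ :=
  if A = ∅ then 0 else (∑ k ∈ Finset.range (n + 1), hs k * (bcount A k : ℝ)) + h

/-- The second order branching clustering function with parameters
`(h_{k,ℓ})_{0 ≤ ℓ < k ≤ n+1}`, `h`. -/
def soPhi (n : ℕ) (H : ℕ → ℕ → ℝ) (h : ℝ) (A : Finset (Leaf n)) : ℝ :=
  if A = ∅ then 0
  else (∑ k ∈ Finset.range (n + 2), ∑ l ∈ Finset.range k, H k l * (b2count A k l : ℝ)) + h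

/-- A non-decreasing (infinite) triangular array. -/
def ArrayMono (H : ℕ → ℕ → ℝ) : Prop :=
  ∀ k k' l l' : ℕ, l < k → l' < k' → k ≤ k' → l ≤ l' → H k l ≤ H k' l'

/-- The Dirichlet energy on `𝕋⁽ⁿ⁾` of `f` (vertices encoded as words of length `≤ n`,
read from the root; a vertex of length `m` has age `n - m` and its parent edge has
conductance `C (n - m)`). -/
def energy (n : ℕ) (C : ℕ → ℝ) (f : List Bool → ℝ) : ℝ :=
  ∑ m ∈ Finset.Icc 1 n, ∑ v : Fin m → Bool,
    C (n - m) * (f (List.ofFn v) - f (List.ofFn v).dropLast) ^ 2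

/-- The capacity of a set of leaves `A ⊆ 𝕃₀⁽ⁿ⁾`. -/
def cap (n : ℕ) (C : ℕ → ℝ) (A : Finset (Leaf n)) : ℝ :=
  sInf {x : ℝ | ∃ f : List Bool → ℝ, f [] = 1 ∧ (∀ u ∈ A, f (List.ofFn u) = 0) ∧
    x = energy n C f}

/-! ### Auxiliary lemmas -/

lemma trunc_of_le {n k : ℕ} (hk : n ≤ k) (u : Leaf n) : trunc k u = fun _ => false := by
  funext i
  simp [trunc, Nat.sub_eq_zero_of_le hk]

lemma trunc_trunc {n : ℕ} {l L : ℕ} (h : l ≤ L) (u : Leaf n) :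
    trunc L (trunc l u) = trunc L u := by
  funext i
  simp only [trunc]
  by_cases hi : (i : ℕ) < n - L
  · rw [if_pos hi, if_pos hi, if_pos (lt_of_lt_of_le hi (Nat.sub_le_sub_left h n))]
  · rw [if_neg hi, if_neg hi]

lemma trunc_cons {n k : ℕ} (hk : k ≤ n) (b : Bool) (u : Leaf n) :
    trunc k (Fin.cons b u : Leaf (n+1)) = Fin.cons b (trunc k u) := by
  funext i
  refine Fin.cases ?_ ?_ i
  · simp [trunc, Nat.succ_sub hk]
  · intro j
    simp [trunc, Nat.succ_sub hk, Nat.succ_lt_succ_iff]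

lemma meetAge_le_iff {n k : ℕ} {u v : Leaf n} : meetAge u v ≤ k ↔ trunc k u = trunc k v := by
  by_cases huv : u = v
  · simp [meetAge, huv]
  · rw [meetAge, if_neg huv]
    set T : Set ℕ := {i : ℕ | ∃ h : i < n, u ⟨i, h⟩ ≠ v ⟨i, h⟩} with hT
    have hTne : T.Nonempty := by
      obtain ⟨i, hi⟩ := Function.ne_iff.mp huv
      exact ⟨(i : ℕ), ⟨i.isLt, by simpa using hi⟩⟩
    set s := sInf T with hs
    constructor
    · intro h
      funext i
      simp only [trunc]
      by_cases hik : (i : ℕ) < n - k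
      · rw [if_pos hik, if_pos hik]
        by_contra hne
        have hmem : (i : ℕ) ∈ T := ⟨i.isLt, by simpa using hne⟩
        have h2 : s ≤ (i : ℕ) := Nat.sInf_le hmem
        omega
      · rw [if_neg hik, if_neg hik]
    · intro h
      have hle : n - k ≤ s := by
        apply le_csInf hTne
        intro m hm
        obtain ⟨hmn, hne⟩ := hm
        by_contra hlt
        push_neg at hlt
        have heq : u ⟨m, hmn⟩ = v ⟨m, hmn⟩ := by
          have := congrFun h ⟨m, hmn⟩
          simpa [trunc, hlt] using this
        exact hne heq
      omega

lemma meetAge_le {n : ℕ} (u v : Leaf n) : meetAge u v ≤ n :=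
  meetAge_le_iff.mpr (by rw [trunc_of_le le_rfl, trunc_of_le le_rfl])

lemma meetAge_cons_le {n : ℕ} (b : Bool) (u v : Leaf n) :
    meetAge (Fin.cons b u : Leaf (n+1)) (Fin.cons b v) ≤ n := by
  rw [meetAge_le_iff, trunc_cons le_rfl, trunc_cons le_rfl,
    trunc_of_le le_rfl, trunc_of_le le_rfl]

lemma meetAge_cons_same {n : ℕ} (b : Bool) (u v : Leaf n) :
    meetAge (Fin.cons b u : Leaf (n+1)) (Fin.cons b v) = meetAge u v := by
  refine le_antisymm ?_ ?_
  · rw [meetAge_le_iff, trunc_cons (meetAge_le u v), trunc_cons (meetAge_le u v),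
      meetAge_le_iff.mp (le_refl (meetAge u v))]
  · rw [meetAge_le_iff]
    have h := meetAge_le_iff.mp (le_refl (meetAge (Fin.cons b u : Leaf (n+1)) (Fin.cons b v)))
    rw [trunc_cons (meetAge_cons_le b u v), trunc_cons (meetAge_cons_le b u v)] at h
    exact Fin.cons_right_injective (α := fun _ => Bool) b h

lemma meetAge_cons_ne {n : ℕ} {b b' : Bool} (hbb : b ≠ b') (u v : Leaf n) :
    meetAge (Fin.cons b u : Leaf (n+1)) (Fin.cons b' v) = n + 1 := by
  have h1 := meetAge_le (Fin.cons b u : Leaf (n+1)) (Fin.cons b' v)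
  by_contra hne
  have h2 : meetAge (Fin.cons b u : Leaf (n+1)) (Fin.cons b' v) ≤ n := by omega
  rw [meetAge_le_iff] at h2
  have h3 := congrFun h2 0
  have hsub : n + 1 - n = 1 := by omega
  simp [trunc, hsub] at h3
  exact hbb h3

/-- Prepending a letter. -/
def cns {n : ℕ} (b : Bool) : Leaf n → Leaf (n+1) := fun u => Fin.cons b u

lemma cns_injective {n : ℕ} (b : Bool) : Function.Injective (cns (n := n) b) :=
  fun _ _ h => Fin.cons_right_injective (α := fun _ => Bool) b h

lemma cns_mem_image_iff {n : ℕ} {b : Bool} {A : Finset (Leaf n)} {u : Leaf n} :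
    cns b u ∈ A.image (cns b) ↔ u ∈ A := by
  constructor
  · intro h
    obtain ⟨v, hv, hvu⟩ := Finset.mem_image.mp h
    rwa [← cns_injective b hvu]
  · exact Finset.mem_image_of_mem _

lemma cns_not_mem_image {n : ℕ} {b b' : Bool} (hbb : b ≠ b') {A : Finset (Leaf n)}
    (u : Leaf n) : cns b u ∉ A.image (cns b') := by
  intro h
  obtain ⟨v, _, hv⟩ := Finset.mem_image.mp h
  have := congrFun hv 0
  simp [cns] at this
  exact hbb this.symm

lemma mem_branchPts {n : ℕ} {A : Finset (Leaf n)} {k : ℕ} {x : Leaf n} :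
    x ∈ branchPts A k ↔ ∃ u ∈ A, ∃ v ∈ A, meetAge u v = k ∧ trunc k u = x := by
  simp only [branchPts, Finset.mem_image, Finset.mem_filter, Finset.mem_product, Prod.exists]
  constructor
  · rintro ⟨u, v, ⟨⟨hu, hv⟩, hm⟩, ht⟩
    exact ⟨u, hu, v, hv, hm, ht⟩
  · rintro ⟨u, hu, v, hv, hm, ht⟩
    exact ⟨u, v, ⟨⟨hu, hv⟩, hm⟩, ht⟩

lemma meetAge_cns_same {n : ℕ} (b : Bool) (u v : Leaf n) :
    meetAge (cns b u) (cns b v) = meetAge u v := meetAge_cons_same b u v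

lemma meetAge_cns_ne {n : ℕ} {b b' : Bool} (hbb : b ≠ b') (u v : Leaf n) :
    meetAge (cns b u) (cns b' v) = n + 1 := meetAge_cons_ne hbb u v

lemma meetAge_cns_le {n : ℕ} (b : Bool) (u v : Leaf n) :
    meetAge (cns b u) (cns b v) ≤ n := meetAge_cons_le b u v

lemma trunc_cns {n k : ℕ} (hk : k ≤ n) (b : Bool) (u : Leaf n) :
    trunc k (cns b u) = cns b (trunc k u) := trunc_cons hk b u

/-- Joining two subtree configurations. -/
def joinF {n : ℕ} (B₀ B₁ : Finset (Leaf n)) : Finset (Leaf (n+1)) :=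
  B₀.image (cns false) ∪ B₁.image (cns true)

lemma branchPts_image_cns {n : ℕ} (b : Bool) (A : Finset (Leaf n)) {k : ℕ} (hk : k ≤ n) :
    branchPts (A.image (cns b)) k = (branchPts A k).image (cns b) := by
  ext x
  constructor
  · intro hx
    obtain ⟨u, hu, v, hv, hm, ht⟩ := mem_branchPts.mp hx
    obtain ⟨u', hu', rfl⟩ := Finset.mem_image.mp hu
    obtain ⟨v', hv', rfl⟩ := Finset.mem_image.mp hv
    rw [meetAge_cns_same] at hm
    refine Finset.mem_image.mpr ⟨trunc k u', mem_branchPts.mpr ⟨u', hu', v', hv', hm, rfl⟩, ?_⟩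
    rw [← ht, trunc_cns hk]
  · intro hx
    obtain ⟨w, hw, rfl⟩ := Finset.mem_image.mp hx
    obtain ⟨u, hu, v, hv, hm, rfl⟩ := mem_branchPts.mp hw
    refine mem_branchPts.mpr ⟨cns b u, Finset.mem_image_of_mem _ hu, cns b v,
      Finset.mem_image_of_mem _ hv, ?_, trunc_cns hk b u⟩
    rw [meetAge_cns_same, hm]

lemma branchPts_image_cns_top {n : ℕ} (b : Bool) (A : Finset (Leaf n)) :
    branchPts (A.image (cns b)) (n+1) = ∅ := by
  rw [Finset.eq_empty_iff_forall_notMem]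
  intro x hx
  obtain ⟨u, hu, v, hv, hm, _⟩ := mem_branchPts.mp hx
  obtain ⟨u', _, rfl⟩ := Finset.mem_image.mp hu
  obtain ⟨v', _, rfl⟩ := Finset.mem_image.mp hv
  have := meetAge_cns_le b u' v'
  omega

lemma branchPts_join {n : ℕ} (B₀ B₁ : Finset (Leaf n)) {k : ℕ} (hk : k ≤ n) :
    branchPts (joinF B₀ B₁) k =
      (branchPts B₀ k).image (cns false) ∪ (branchPts B₁ k).image (cns true) := by
  ext x
  rw [Finset.mem_union]
  constructor
  · intro hx
    obtain ⟨u, hu, v, hv, hm, ht⟩ := mem_branchPts.mp hx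
    rcases Finset.mem_union.mp hu with hu' | hu' <;>
      rcases Finset.mem_union.mp hv with hv' | hv' <;>
      obtain ⟨u', hu'', rfl⟩ := Finset.mem_image.mp hu' <;>
      obtain ⟨v', hv'', rfl⟩ := Finset.mem_image.mp hv'
    · left
      rw [meetAge_cns_same] at hm
      exact Finset.mem_image.mpr ⟨trunc k u', mem_branchPts.mpr ⟨u', hu'', v', hv'', hm, rfl⟩,
        by rw [← ht, trunc_cns hk]⟩
    · exfalso
      rw [meetAge_cns_ne (by simp) u' v'] at hm
      omega
    · exfalso
      rw [meetAge_cns_ne (by simp) u' v'] at hm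
      omega
    · right
      rw [meetAge_cns_same] at hm
      exact Finset.mem_image.mpr ⟨trunc k u', mem_branchPts.mpr ⟨u', hu'', v', hv'', hm, rfl⟩,
        by rw [← ht, trunc_cns hk]⟩
  · rintro (hx | hx) <;> obtain ⟨w, hw, rfl⟩ := Finset.mem_image.mp hx <;>
      obtain ⟨u, hu, v, hv, hm, rfl⟩ := mem_branchPts.mp hw
    · refine mem_branchPts.mpr ⟨cns false u, Finset.mem_union_left _ (Finset.mem_image_of_mem _ hu),
        cns false v, Finset.mem_union_left _ (Finset.mem_image_of_mem _ hv), ?_, trunc_cns hk false u⟩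
      rw [meetAge_cns_same, hm]
    · refine mem_branchPts.mpr ⟨cns true u, Finset.mem_union_right _ (Finset.mem_image_of_mem _ hu),
        cns true v, Finset.mem_union_right _ (Finset.mem_image_of_mem _ hv), ?_, trunc_cns hk true u⟩
      rw [meetAge_cns_same, hm]

lemma branchPts_join_top {n : ℕ} {B₀ B₁ : Finset (Leaf n)} (h₀ : B₀.Nonempty)
    (h₁ : B₁.Nonempty) :
    branchPts (joinF B₀ B₁) (n+1) = {(fun _ => false : Leaf (n+1))} := by
  ext x
  rw [Finset.mem_singleton]
  constructor
  · intro hx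
    obtain ⟨u, _, v, _, _, ht⟩ := mem_branchPts.mp hx
    rw [← ht, trunc_of_le le_rfl]
  · rintro rfl
    obtain ⟨u, hu⟩ := h₀
    obtain ⟨v, hv⟩ := h₁
    exact mem_branchPts.mpr ⟨cns false u, Finset.mem_union_left _ (Finset.mem_image_of_mem _ hu),
      cns true v, Finset.mem_union_right _ (Finset.mem_image_of_mem _ hv),
      meetAge_cns_ne (by simp) u v, trunc_of_le le_rfl _⟩

lemma image_cns_disjoint {n : ℕ} (S T : Finset (Leaf n)) :
    Disjoint (S.image (cns false)) (T.image (cns true)) := by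
  rw [Finset.disjoint_left]
  intro x hx hx'
  obtain ⟨u, _, rfl⟩ := Finset.mem_image.mp hx
  exact cns_not_mem_image (by simp) u hx'

lemma cns_false_mem_union_iff {n : ℕ} {S T : Finset (Leaf n)} {w : Leaf n} :
    cns false w ∈ S.image (cns false) ∪ T.image (cns true) ↔ w ∈ S := by
  rw [Finset.mem_union]
  constructor
  · rintro (h | h)
    · exact cns_mem_image_iff.mp h
    · exact absurd h (cns_not_mem_image (by simp) w)
  · intro h
    exact Or.inl (Finset.mem_image_of_mem _ h)

lemma cns_true_mem_union_iff {n : ℕ} {S T : Finset (Leaf n)} {w : Leaf n} :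
    cns true w ∈ S.image (cns false) ∪ T.image (cns true) ↔ w ∈ T := by
  rw [Finset.mem_union]
  constructor
  · rintro (h | h)
    · exact absurd h (cns_not_mem_image (by simp) w)
    · exact cns_mem_image_iff.mp h
  · intro h
    exact Or.inr (Finset.mem_image_of_mem _ h)

lemma card_filter_join_aux {n : ℕ} (S T : Finset (Leaf n)) (P : Leaf (n+1) → Prop)
    [DecidablePred P] [DecidablePred fun w => P (cns false w)]
    [DecidablePred fun w => P (cns true w)] :
    ((S.image (cns false) ∪ T.image (cns true)).filter P).card
      = (S.filter fun w => P (cns false w)).card + (T.filter fun w => P (cns true w)).card := by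
  rw [Finset.filter_union,
    Finset.card_union_of_disjoint
      (Finset.disjoint_filter_filter (image_cns_disjoint S T)),
    Finset.filter_image, Finset.filter_image,
    Finset.card_image_of_injective _ (cns_injective _),
    Finset.card_image_of_injective _ (cns_injective _)]
  congr 1 <;> exact congrArg Finset.card (Finset.filter_congr_decidable ..)

lemma card_filter_image_aux {n : ℕ} (b : Bool) (S : Finset (Leaf n)) (P : Leaf (n+1) → Prop)
    [DecidablePred P] [DecidablePred fun w => P (cns b w)] :
    ((S.image (cns b)).filter P).card = (S.filter fun w => P (cns b w)).card := by
  rw [Finset.filter_image, Finset.card_image_of_injective _ (cns_injective _)]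
  exact congrArg Finset.card (Finset.filter_congr_decidable ..)

lemma trunc_cns_mem_join_false {n : ℕ} (B₀ B₁ : Finset (Leaf n)) {j : ℕ} (hj : j ≤ n)
    (w : Leaf n) :
    trunc j (cns false w) ∈ branchPts (joinF B₀ B₁) j ↔ trunc j w ∈ branchPts B₀ j := by
  rw [trunc_cns hj, branchPts_join _ _ hj, cns_false_mem_union_iff]

lemma trunc_cns_mem_join_true {n : ℕ} (B₀ B₁ : Finset (Leaf n)) {j : ℕ} (hj : j ≤ n)
    (w : Leaf n) :
    trunc j (cns true w) ∈ branchPts (joinF B₀ B₁) j ↔ trunc j w ∈ branchPts B₁ j := by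
  rw [trunc_cns hj, branchPts_join _ _ hj, cns_true_mem_union_iff]

lemma trunc_cns_mem_image {n : ℕ} (b : Bool) (A : Finset (Leaf n)) {j : ℕ} (hj : j ≤ n)
    (w : Leaf n) :
    trunc j (cns b w) ∈ branchPts (A.image (cns b)) j ↔ trunc j w ∈ branchPts A j := by
  rw [trunc_cns hj, branchPts_image_cns b A hj, cns_mem_image_iff]

lemma b2count_join_low {n : ℕ} (B₀ B₁ : Finset (Leaf n)) {k l : ℕ} (hk : k ≤ n) (hl : l < k) :
    b2count (joinF B₀ B₁) k l = b2count B₀ k l + b2count B₁ k l := by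
  have hl' : l ≤ n := by omega
  simp only [b2count, if_neg (show k ≠ n + 1 + 1 by omega), if_neg (show k ≠ n + 1 by omega)]
  rw [branchPts_join _ _ hl', card_filter_join_aux]
  congr 1
  · apply congrArg
    apply Finset.filter_congr
    intro w _
    constructor
    · rintro ⟨h1, h2⟩
      refine ⟨(trunc_cns_mem_join_false B₀ B₁ hk w).mp h1, fun j hj1 hj2 hmem => ?_⟩
      exact h2 j hj1 hj2 ((trunc_cns_mem_join_false B₀ B₁ (show j ≤ n by omega) w).mpr hmem)
    · rintro ⟨h1, h2⟩
      refine ⟨(trunc_cns_mem_join_false B₀ B₁ hk w).mpr h1, fun j hj1 hj2 hmem => ?_⟩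
      exact h2 j hj1 hj2 ((trunc_cns_mem_join_false B₀ B₁ (show j ≤ n by omega) w).mp hmem)
  · apply congrArg
    apply Finset.filter_congr
    intro w _
    constructor
    · rintro ⟨h1, h2⟩
      refine ⟨(trunc_cns_mem_join_true B₀ B₁ hk w).mp h1, fun j hj1 hj2 hmem => ?_⟩
      exact h2 j hj1 hj2 ((trunc_cns_mem_join_true B₀ B₁ (show j ≤ n by omega) w).mpr hmem)
    · rintro ⟨h1, h2⟩
      refine ⟨(trunc_cns_mem_join_true B₀ B₁ hk w).mpr h1, fun j hj1 hj2 hmem => ?_⟩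
      exact h2 j hj1 hj2 ((trunc_cns_mem_join_true B₀ B₁ (show j ≤ n by omega) w).mp hmem)

lemma b2count_join_mid {n : ℕ} {B₀ B₁ : Finset (Leaf n)} (h₀ : B₀.Nonempty) (h₁ : B₁.Nonempty)
    {l : ℕ} (hl : l ≤ n) :
    b2count (joinF B₀ B₁) (n+1) l = b2count B₀ (n+1) l + b2count B₁ (n+1) l := by
  simp only [b2count, if_neg (show n + 1 ≠ n + 1 + 1 by omega), if_pos rfl, if_true]
  rw [branchPts_join _ _ hl, card_filter_join_aux]
  congr 1
  · apply congrArg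
    apply Finset.filter_congr
    intro w _
    constructor
    · rintro ⟨_, h2⟩ j hj1 hj2
      intro hmem
      exact h2 j hj1 (by omega) ((trunc_cns_mem_join_false B₀ B₁ (by omega) w).mpr hmem)
    · intro h2
      refine ⟨?_, fun j hj1 hj2 hmem => ?_⟩
      · rw [trunc_of_le le_rfl, branchPts_join_top h₀ h₁]
        exact Finset.mem_singleton_self _
      · exact h2 j hj1 (by omega) ((trunc_cns_mem_join_false B₀ B₁ (by omega) w).mp hmem)
  · apply congrArg
    apply Finset.filter_congr
    intro w _
    constructor
    · rintro ⟨_, h2⟩ j hj1 hj2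
      intro hmem
      exact h2 j hj1 (by omega) ((trunc_cns_mem_join_true B₀ B₁ (by omega) w).mpr hmem)
    · intro h2
      refine ⟨?_, fun j hj1 hj2 hmem => ?_⟩
      · rw [trunc_of_le le_rfl, branchPts_join_top h₀ h₁]
        exact Finset.mem_singleton_self _
      · exact h2 j hj1 (by omega) ((trunc_cns_mem_join_true B₀ B₁ (by omega) w).mp hmem)

lemma b2count_join_top_top {n : ℕ} {B₀ B₁ : Finset (Leaf n)} (h₀ : B₀.Nonempty)
    (h₁ : B₁.Nonempty) :
    b2count (joinF B₀ B₁) (n+2) (n+1) = 1 := by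
  simp only [b2count, if_pos rfl, if_true]
  rw [branchPts_join_top h₀ h₁, Finset.filter_true_of_mem (fun x _ j hj1 hj2 => by omega),
    Finset.card_singleton]

lemma b2count_join_top_low {n : ℕ} {B₀ B₁ : Finset (Leaf n)} (h₀ : B₀.Nonempty)
    (h₁ : B₁.Nonempty) {l : ℕ} (hl : l ≤ n) :
    b2count (joinF B₀ B₁) (n+2) l = 0 := by
  simp only [b2count, if_pos rfl, if_true]
  rw [Finset.card_eq_zero, Finset.filter_eq_empty_iff]
  intro w _
  intro hcon
  apply hcon (n+1) (by omega) le_rfl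
  rw [trunc_of_le le_rfl, branchPts_join_top h₀ h₁]
  exact Finset.mem_singleton_self _

lemma b2count_image_low {n : ℕ} (b : Bool) (A : Finset (Leaf n)) {k l : ℕ} (hk : k ≤ n)
    (hl : l < k) :
    b2count (A.image (cns b)) k l = b2count A k l := by
  have hl' : l ≤ n := by omega
  simp only [b2count, if_neg (show k ≠ n + 1 + 1 by omega), if_neg (show k ≠ n + 1 by omega)]
  rw [branchPts_image_cns b A hl', card_filter_image_aux]
  apply congrArg
  apply Finset.filter_congr
  intro w _
  constructor
  · rintro ⟨h1, h2⟩
    refine ⟨(trunc_cns_mem_image b A hk w).mp h1, fun j hj1 hj2 hmem => ?_⟩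
    exact h2 j hj1 hj2 ((trunc_cns_mem_image b A (by omega) w).mpr hmem)
  · rintro ⟨h1, h2⟩
    refine ⟨(trunc_cns_mem_image b A hk w).mpr h1, fun j hj1 hj2 hmem => ?_⟩
    exact h2 j hj1 hj2 ((trunc_cns_mem_image b A (by omega) w).mp hmem)

lemma b2count_image_mid {n : ℕ} (b : Bool) (A : Finset (Leaf n)) (l : ℕ) :
    b2count (A.image (cns b)) (n+1) l = 0 := by
  simp only [b2count, if_neg (show n + 1 ≠ n + 1 + 1 by omega), if_pos rfl, if_true]
  rw [Finset.card_eq_zero, Finset.filter_eq_empty_iff]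
  intro w _
  rintro ⟨h1, _⟩
  rw [branchPts_image_cns_top] at h1
  exact absurd h1 (Finset.notMem_empty _)

lemma b2count_image_top {n : ℕ} (b : Bool) (A : Finset (Leaf n)) {l : ℕ} (hl : l ≤ n) :
    b2count (A.image (cns b)) (n+2) l = b2count A (n+1) l := by
  simp only [b2count, if_pos rfl, if_true]
  rw [branchPts_image_cns b A hl, card_filter_image_aux]
  apply congrArg
  apply Finset.filter_congr
  intro w _
  constructor
  · intro h2 j hj1 hj2 hmem
    exact h2 j hj1 (by omega) ((trunc_cns_mem_image b A (by omega) w).mpr hmem)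
  · intro h2 j hj1 hj2 hmem
    rcases Nat.lt_or_ge j (n+1) with hj | hj
    · exact h2 j hj1 (by omega) ((trunc_cns_mem_image b A (by omega) w).mp hmem)
    · have hj' : j = n + 1 := by omega
      subst hj'
      rw [branchPts_image_cns_top] at hmem
      exact absurd hmem (Finset.notMem_empty _)

lemma b2count_image_top_top {n : ℕ} (b : Bool) (A : Finset (Leaf n)) :
    b2count (A.image (cns b)) (n+2) (n+1) = 0 := by
  simp only [b2count, if_pos rfl, if_true]
  rw [Finset.card_eq_zero, Finset.filter_eq_empty_iff]
  intro w hw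
  rw [branchPts_image_cns_top] at hw
  exact absurd hw (Finset.notMem_empty _)

/-- Age of the oldest branching point of a nonempty leaf set. -/
def maxAge {n : ℕ} (B : Finset (Leaf n)) (hB : B.Nonempty) : ℕ :=
  ((B ×ˢ B).image fun p => meetAge p.1 p.2).max' (by
    obtain ⟨u, hu⟩ := hB
    exact ⟨meetAge u u, Finset.mem_image.mpr ⟨(u, u), Finset.mem_product.mpr ⟨hu, hu⟩, rfl⟩⟩)

lemma maxAge_le {n : ℕ} {B : Finset (Leaf n)} (hB : B.Nonempty) : maxAge B hB ≤ n := by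
  obtain ⟨p, hp, hp2⟩ := Finset.mem_image.mp (((B ×ˢ B).image fun p => meetAge p.1 p.2).max'_mem
    (by obtain ⟨u, hu⟩ := hB
        exact ⟨meetAge u u, Finset.mem_image.mpr ⟨(u, u), Finset.mem_product.mpr ⟨hu, hu⟩, rfl⟩⟩))
  rw [maxAge, ← hp2]
  exact meetAge_le _ _

lemma meetAge_le_maxAge {n : ℕ} {B : Finset (Leaf n)} (hB : B.Nonempty) {u v : Leaf n}
    (hu : u ∈ B) (hv : v ∈ B) : meetAge u v ≤ maxAge B hB := by
  unfold maxAge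
  exact Finset.le_max' ((B ×ˢ B).image fun p => meetAge p.1 p.2) _
    (Finset.mem_image.mpr ⟨(u, v), Finset.mem_product.mpr ⟨hu, hv⟩, rfl⟩)

lemma exists_maxAge {n : ℕ} {B : Finset (Leaf n)} (hB : B.Nonempty) :
    ∃ u ∈ B, ∃ v ∈ B, meetAge u v = maxAge B hB := by
  obtain ⟨p, hp, hp2⟩ := Finset.mem_image.mp (((B ×ˢ B).image fun p => meetAge p.1 p.2).max'_mem
    (by obtain ⟨u, hu⟩ := hB
        exact ⟨meetAge u u, Finset.mem_image.mpr ⟨(u, u), Finset.mem_product.mpr ⟨hu, hu⟩, rfl⟩⟩))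
  obtain ⟨hp1', hp2'⟩ := Finset.mem_product.mp hp
  exact ⟨p.1, hp1', p.2, hp2', hp2⟩

lemma branchPts_empty_of_gt_maxAge {n : ℕ} {B : Finset (Leaf n)} (hB : B.Nonempty) {j : ℕ}
    (hj : maxAge B hB < j) : branchPts B j = ∅ := by
  rw [Finset.eq_empty_iff_forall_notMem]
  intro x hx
  obtain ⟨u, hu, v, hv, hm, _⟩ := mem_branchPts.mp hx
  have := meetAge_le_maxAge hB hu hv
  omega

lemma branchPts_maxAge_singleton {n : ℕ} {B : Finset (Leaf n)} (hB : B.Nonempty) :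
    ∀ u ∈ B, branchPts B (maxAge B hB) = {trunc (maxAge B hB) u} := by
  intro u hu
  set L := maxAge B hB with hL
  have hagree : ∀ w ∈ B, trunc L w = trunc L u := fun w hw =>
    (meetAge_le_iff.mp (meetAge_le_maxAge hB hw hu))
  ext x
  rw [Finset.mem_singleton]
  constructor
  · intro hx
    obtain ⟨u', hu', v', hv', hm, ht⟩ := mem_branchPts.mp hx
    rw [← ht]
    exact hagree u' hu'
  · rintro rfl
    obtain ⟨u', hu', v', hv', hm⟩ := exists_maxAge hB
    exact mem_branchPts.mpr ⟨u', hu', v', hv', hm, hagree u' hu'⟩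

/-- At level `n`, the indicator counts `b_{n+1,ℓ}` select exactly the maximal age. -/
lemma b2count_top_eq {n : ℕ} {B : Finset (Leaf n)} (hB : B.Nonempty) (l : ℕ) :
    b2count B (n+1) l = if l = maxAge B hB then 1 else 0 := by
  set L := maxAge B hB with hL
  simp only [b2count, if_pos rfl, if_true]
  by_cases hlL : l = L
  · subst hlL
    obtain ⟨u, hu⟩ := id hB
    rw [branchPts_maxAge_singleton hB u hu, if_pos rfl,
      Finset.filter_true_of_mem, Finset.card_singleton]
    intro x _ j hj1 hj2 hmem
    rw [branchPts_empty_of_gt_maxAge hB (by omega)] at hmem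
    exact absurd hmem (Finset.notMem_empty _)
  · rw [if_neg hlL, Finset.card_eq_zero, Finset.filter_eq_empty_iff]
    intro w hw
    rcases Nat.lt_or_ge L l with hcase | hcase
    · exfalso
      obtain ⟨u', hu', v', hv', hm, _⟩ := mem_branchPts.mp hw
      have := meetAge_le_maxAge hB hu' hv'
      omega
    · have hlt : l < L := by omega
      intro hcon
      apply hcon L hlt (maxAge_le hB)
      obtain ⟨u', hu', v', hv', hm, ht⟩ := mem_branchPts.mp hw
      obtain ⟨u, hu⟩ := id hB
      rw [branchPts_maxAge_singleton hB u hu, Finset.mem_singleton, ← ht,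
        trunc_trunc (le_of_lt hlt)]
      exact meetAge_le_iff.mp (meetAge_le_maxAge hB hu' hu)

lemma sum_b2top {n : ℕ} {B : Finset (Leaf n)} (hB : B.Nonempty) (c : ℕ → ℝ) :
    ∑ l ∈ Finset.range (n+1), c l * (b2count B (n+1) l : ℝ) = c (maxAge B hB) := by
  rw [Finset.sum_eq_single_of_mem (maxAge B hB)
    (Finset.mem_range.mpr (by have := maxAge_le hB; omega))]
  · rw [b2count_top_eq hB, if_pos rfl]
    norm_num
  · intro l _ hl
    rw [b2count_top_eq hB, if_neg hl]
    norm_num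

lemma joinF_nonempty {n : ℕ} {B₀ B₁ : Finset (Leaf n)} (h₀ : B₀.Nonempty) :
    (joinF B₀ B₁).Nonempty := by
  obtain ⟨u, hu⟩ := h₀
  exact ⟨cns false u, Finset.mem_union_left _ (Finset.mem_image_of_mem _ hu)⟩

lemma soPhi_join_both {n : ℕ} (H : ℕ → ℕ → ℝ) {B₀ B₁ : Finset (Leaf n)} (h₀ : B₀.Nonempty)
    (h₁ : B₁.Nonempty) :
    soPhi (n+1) H (H (n+2) (n+1)) (joinF B₀ B₁)
      = soPhi n H (H (n+1) n) B₀ + soPhi n H (H (n+1) n) B₁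
        + 2 * (H (n+2) (n+1) - H (n+1) n) := by
  rw [soPhi, if_neg (Finset.nonempty_iff_ne_empty.mp (joinF_nonempty h₀)),
    soPhi, if_neg (Finset.nonempty_iff_ne_empty.mp h₀),
    soPhi, if_neg (Finset.nonempty_iff_ne_empty.mp h₁)]
  rw [show n + 1 + 2 = (n + 2) + 1 by omega, Finset.sum_range_succ]
  have htop : ∑ l ∈ Finset.range (n+2), H (n+2) l * (b2count (joinF B₀ B₁) (n+2) l : ℝ)
      = H (n+2) (n+1) := by
    rw [Finset.sum_range_succ, b2count_join_top_top h₀ h₁, Finset.sum_eq_zero, Nat.cast_one,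
      mul_one, zero_add]
    intro l hl
    rw [Finset.mem_range] at hl
    rw [b2count_join_top_low h₀ h₁ (by omega : l ≤ n), Nat.cast_zero, mul_zero]
  rw [htop]
  have hmain : ∑ k ∈ Finset.range (n+2), ∑ l ∈ Finset.range k,
      H k l * (b2count (joinF B₀ B₁) k l : ℝ)
      = ∑ k ∈ Finset.range (n+2), ∑ l ∈ Finset.range k,
        (H k l * (b2count B₀ k l : ℝ) + H k l * (b2count B₁ k l : ℝ)) := by
    apply Finset.sum_congr rfl
    intro k hk
    apply Finset.sum_congr rfl
    intro l hl
    rw [Finset.mem_range] at hk hl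
    rcases Nat.lt_or_ge k (n+1) with h | h
    · rw [b2count_join_low _ _ (by omega) hl]
      push_cast
      ring
    · have hk' : k = n + 1 := by omega
      subst hk'
      rw [b2count_join_mid h₀ h₁ (by omega : l ≤ n)]
      push_cast
      ring
  rw [hmain]
  simp only [Finset.sum_add_distrib]
  ring

lemma soPhi_image {n : ℕ} (H : ℕ → ℕ → ℝ) (b : Bool) {B : Finset (Leaf n)} (hB : B.Nonempty) :
    soPhi (n+1) H (H (n+2) (n+1)) (B.image (cns b))
      = soPhi n H (H (n+1) n) B
        + (H (n+2) (maxAge B hB) - H (n+1) (maxAge B hB))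
        + (H (n+2) (n+1) - H (n+1) n) := by
  rw [soPhi, if_neg (Finset.nonempty_iff_ne_empty.mp (hB.image _)),
    soPhi, if_neg (Finset.nonempty_iff_ne_empty.mp hB)]
  rw [show n + 1 + 2 = (n + 2) + 1 by omega, Finset.sum_range_succ]
  have htop : ∑ l ∈ Finset.range (n+2), H (n+2) l * (b2count (B.image (cns b)) (n+2) l : ℝ)
      = H (n+2) (maxAge B hB) := by
    rw [Finset.sum_range_succ, b2count_image_top_top, Nat.cast_zero, mul_zero, add_zero]
    have : ∀ l ∈ Finset.range (n+1),
        H (n+2) l * (b2count (B.image (cns b)) (n+2) l : ℝ)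
          = H (n+2) l * (b2count B (n+1) l : ℝ) := by
      intro l hl
      rw [Finset.mem_range] at hl
      rw [b2count_image_top b B (by omega : l ≤ n)]
    rw [Finset.sum_congr rfl this, sum_b2top hB]
  rw [htop]
  have hmain : ∑ k ∈ Finset.range (n+2), ∑ l ∈ Finset.range k,
      H k l * (b2count (B.image (cns b)) k l : ℝ)
      = ∑ k ∈ Finset.range (n+1), ∑ l ∈ Finset.range k, H k l * (b2count B k l : ℝ) := by
    rw [Finset.sum_range_succ]
    have hz : ∑ l ∈ Finset.range (n+1), H (n+1) l * (b2count (B.image (cns b)) (n+1) l : ℝ)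
        = 0 := by
      apply Finset.sum_eq_zero
      intro l _
      rw [b2count_image_mid, Nat.cast_zero, mul_zero]
    rw [hz, add_zero]
    apply Finset.sum_congr rfl
    intro k hk
    apply Finset.sum_congr rfl
    intro l hl
    rw [Finset.mem_range] at hk hl
    rw [b2count_image_low b B (by omega : k ≤ n) hl]
  rw [hmain]
  have hB' : ∑ k ∈ Finset.range (n+2), ∑ l ∈ Finset.range k, H k l * (b2count B k l : ℝ)
      = ∑ k ∈ Finset.range (n+1), ∑ l ∈ Finset.range k, H k l * (b2count B k l : ℝ)
        + H (n+1) (maxAge B hB) := by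
    rw [Finset.sum_range_succ, sum_b2top hB]
  rw [hB']
  ring

lemma cns_tail {n : ℕ} {b : Bool} {w : Leaf (n+1)} (hb : w 0 = b) :
    cns b (Fin.tail w) = w := by
  rw [cns, ← hb, Fin.cons_self_tail]

lemma cns_zero {n : ℕ} (b : Bool) (u : Leaf n) : cns b u 0 = b := rfl

/-- Splitting a configuration on `𝕋⁽ⁿ⁺¹⁾` into the two subtrees. -/
def splitF {n : ℕ} (C : Finset (Leaf (n+1))) : Finset (Leaf n) × Finset (Leaf n) :=
  ((C.filter fun w => w 0 = false).image Fin.tail,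
   (C.filter fun w => w 0 = true).image Fin.tail)

lemma join_split {n : ℕ} (C : Finset (Leaf (n+1))) : joinF (splitF C).1 (splitF C).2 = C := by
  ext w
  simp only [joinF, splitF, Finset.mem_union]
  constructor
  · rintro (h | h) <;> obtain ⟨u, hu, rfl⟩ := Finset.mem_image.mp h <;>
      obtain ⟨w', hw', rfl⟩ := Finset.mem_image.mp hu <;>
      obtain ⟨hw'C, hw'0⟩ := Finset.mem_filter.mp hw' <;>
      rwa [cns_tail hw'0]
  · intro hw
    rcases Bool.eq_false_or_eq_true (w 0) with hb | hb
    · exact Or.inr (Finset.mem_image.mpr ⟨Fin.tail w,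
        Finset.mem_image_of_mem _ (Finset.mem_filter.mpr ⟨hw, hb⟩), cns_tail hb⟩)
    · exact Or.inl (Finset.mem_image.mpr ⟨Fin.tail w,
        Finset.mem_image_of_mem _ (Finset.mem_filter.mpr ⟨hw, hb⟩), cns_tail hb⟩)

lemma tail_comp_cns {n : ℕ} (b : Bool) : Fin.tail ∘ (cns (n := n) b) = id := by
  funext u
  exact Fin.tail_cons (α := fun _ => Bool) b u

lemma split_join {n : ℕ} (B₀ B₁ : Finset (Leaf n)) : splitF (joinF B₀ B₁) = (B₀, B₁) := by
  have h1 : ∀ (b : Bool) (S T : Finset (Leaf n)),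
      (S.image (cns false) ∪ T.image (cns true)).filter (fun w => w 0 = b)
        = (if b then T else S).image (cns b) := by
    intro b S T
    rw [Finset.filter_union]
    rcases b with _ | _
    · rw [Finset.filter_true_of_mem (fun x hx => by
        obtain ⟨u, _, rfl⟩ := Finset.mem_image.mp hx; rfl),
        Finset.filter_eq_empty_iff.mpr (fun x hx => by
          obtain ⟨u, _, rfl⟩ := Finset.mem_image.mp hx; simp [cns_zero]),
        Finset.union_empty]
      simp
    · rw [Finset.filter_eq_empty_iff.mpr (fun x hx => by
        obtain ⟨u, _, rfl⟩ := Finset.mem_image.mp hx; simp [cns_zero]),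
        Finset.filter_true_of_mem (fun x hx => by
          obtain ⟨u, _, rfl⟩ := Finset.mem_image.mp hx; rfl),
        Finset.empty_union]
      simp
  have h2 : ∀ (b : Bool) (S : Finset (Leaf n)), (S.image (cns b)).image Fin.tail = S := by
    intro b S
    rw [Finset.image_image, tail_comp_cns, Finset.image_id]
  rw [splitF, joinF, Prod.mk.injEq]
  constructor
  · rw [h1 false B₀ B₁]
    simpa using h2 false B₀
  · rw [h1 true B₀ B₁]
    simpa using h2 true B₁

/-- The configurations on `𝕋⁽ⁿ⁺¹⁾` correspond to pairs of configurations. -/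
def joinEquiv (n : ℕ) : Finset (Leaf n) × Finset (Leaf n) ≃ Finset (Leaf (n+1)) where
  toFun := fun p => joinF p.1 p.2
  invFun := splitF
  left_inv := fun p => split_join p.1 p.2
  right_inv := join_split

lemma card_joinF {n : ℕ} (B₀ B₁ : Finset (Leaf n)) :
    (joinF B₀ B₁).card = B₀.card + B₁.card := by
  rw [joinF, Finset.card_union_of_disjoint (image_cns_disjoint B₀ B₁),
    Finset.card_image_of_injective _ (cns_injective _),
    Finset.card_image_of_injective _ (cns_injective _)]

lemma soPhi_join_bounds {n : ℕ} (H : ℕ → ℕ → ℝ) (hmono : ArrayMono H) (B₀ B₁ : Finset (Leaf n)) :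
    soPhi n H (H (n+1) n) B₀ + soPhi n H (H (n+1) n) B₁
        ≤ soPhi (n+1) H (H (n+2) (n+1)) (joinF B₀ B₁) ∧
      soPhi (n+1) H (H (n+2) (n+1)) (joinF B₀ B₁)
        ≤ soPhi n H (H (n+1) n) B₀ + soPhi n H (H (n+1) n) B₁
          + 2 * (2 * H (n+2) (n+1) - H (n+1) n - H 1 0) := by
  have h1 : H (n+1) n ≤ H (n+2) (n+1) := hmono _ _ _ _ (by omega) (by omega) (by omega) (by omega)
  have h2 : H 1 0 ≤ H (n+2) (n+1) := hmono _ _ _ _ (by omega) (by omega) (by omega) (by omega)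
  rcases eq_or_ne B₀ ∅ with h₀ | h₀ <;> rcases eq_or_ne B₁ ∅ with h₁ | h₁
  · subst h₀; subst h₁
    have hj : joinF (∅ : Finset (Leaf n)) ∅ = ∅ := by simp [joinF]
    rw [hj]
    simp only [soPhi, if_pos rfl, if_true]
    constructor <;> linarith
  · subst h₀
    have hB₁ : B₁.Nonempty := Finset.nonempty_iff_ne_empty.mpr h₁
    have hj : joinF (∅ : Finset (Leaf n)) B₁ = B₁.image (cns true) := by simp [joinF]
    rw [hj, soPhi_image H true hB₁]
    have hL : maxAge B₁ hB₁ ≤ n := maxAge_le hB₁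
    have h3 : H (n+1) (maxAge B₁ hB₁) ≤ H (n+2) (maxAge B₁ hB₁) :=
      hmono _ _ _ _ (by omega) (by omega) (by omega) (by omega)
    have h4 : H (n+2) (maxAge B₁ hB₁) ≤ H (n+2) (n+1) :=
      hmono _ _ _ _ (by omega) (by omega) (by omega) (by omega)
    have h5 : H 1 0 ≤ H (n+1) (maxAge B₁ hB₁) :=
      hmono _ _ _ _ (by omega) (by omega) (by omega) (by omega)
    have hz : soPhi n H (H (n+1) n) (∅ : Finset (Leaf n)) = 0 := by
      simp only [soPhi, if_pos rfl, if_true]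
    rw [hz]
    constructor <;> linarith
  · subst h₁
    have hB₀ : B₀.Nonempty := Finset.nonempty_iff_ne_empty.mpr h₀
    have hj : joinF B₀ (∅ : Finset (Leaf n)) = B₀.image (cns false) := by simp [joinF]
    rw [hj, soPhi_image H false hB₀]
    have hL : maxAge B₀ hB₀ ≤ n := maxAge_le hB₀
    have h3 : H (n+1) (maxAge B₀ hB₀) ≤ H (n+2) (maxAge B₀ hB₀) :=
      hmono _ _ _ _ (by omega) (by omega) (by omega) (by omega)
    have h4 : H (n+2) (maxAge B₀ hB₀) ≤ H (n+2) (n+1) :=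
      hmono _ _ _ _ (by omega) (by omega) (by omega) (by omega)
    have h5 : H 1 0 ≤ H (n+1) (maxAge B₀ hB₀) :=
      hmono _ _ _ _ (by omega) (by omega) (by omega) (by omega)
    have hz : soPhi n H (H (n+1) n) (∅ : Finset (Leaf n)) = 0 := by
      simp only [soPhi, if_pos rfl, if_true]
    rw [hz]
    constructor <;> linarith
  · have hB₀ : B₀.Nonempty := Finset.nonempty_iff_ne_empty.mpr h₀
    have hB₁ : B₁.Nonempty := Finset.nonempty_iff_ne_empty.mpr h₁
    rw [soPhi_join_both H hB₀ hB₁]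
    constructor <;> linarith

lemma Z_pos (n : ℕ) (Φ : Finset (Leaf n) → ℝ) (J : ℝ) : 0 < Z n Φ J :=
  Finset.sum_pos (fun _ _ => Real.exp_pos _) ⟨∅, Finset.mem_univ ∅⟩

lemma Z_succ_eq (n : ℕ) (Φ' : Finset (Leaf (n+1)) → ℝ) (J : ℝ) :
    Z (n+1) Φ' J = ∑ p : Finset (Leaf n) × Finset (Leaf n),
      Real.exp (J * ((p.1.card : ℝ) + (p.2.card : ℝ)) - Φ' (joinF p.1 p.2)) := by
  rw [Z]
  rw [← Equiv.sum_comp (joinEquiv n) (fun A => Real.exp (J * (A.card : ℝ) - Φ' A))]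
  apply Finset.sum_congr rfl
  intro p _
  have : ((joinEquiv n) p).card = p.1.card + p.2.card := card_joinF p.1 p.2
  rw [show (joinEquiv n) p = joinF p.1 p.2 from rfl, card_joinF]
  push_cast
  ring_nf

lemma Z_sq (n : ℕ) (Φ : Finset (Leaf n) → ℝ) (J : ℝ) :
    Z n Φ J * Z n Φ J = ∑ p : Finset (Leaf n) × Finset (Leaf n),
      Real.exp (J * ((p.1.card : ℝ) + (p.2.card : ℝ)) - (Φ p.1 + Φ p.2)) := by
  rw [Z, Finset.sum_mul_sum, Fintype.sum_prod_type]
  apply Finset.sum_congr rfl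
  intro B₀ _
  apply Finset.sum_congr rfl
  intro B₁ _
  rw [← Real.exp_add]
  ring_nf

lemma Z_step (n : ℕ) (H : ℕ → ℕ → ℝ) (hmono : ArrayMono H) (J : ℝ) :
    Real.exp (-2 * (2 * H (n+2) (n+1) - H (n+1) n - H 1 0))
        * (Z n (soPhi n H (H (n+1) n)) J * Z n (soPhi n H (H (n+1) n)) J)
      ≤ Z (n+1) (soPhi (n+1) H (H (n+2) (n+1))) J ∧
    Z (n+1) (soPhi (n+1) H (H (n+2) (n+1))) J
      ≤ Z n (soPhi n H (H (n+1) n)) J * Z n (soPhi n H (H (n+1) n)) J := by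
  rw [Z_succ_eq, Z_sq, Finset.mul_sum]
  constructor
  · apply Finset.sum_le_sum
    intro p _
    rw [← Real.exp_add]
    apply Real.exp_le_exp.mpr
    have := (soPhi_join_bounds H hmono p.1 p.2).2
    linarith
  · apply Finset.sum_le_sum
    intro p _
    apply Real.exp_le_exp.mpr
    have := (soPhi_join_bounds H hmono p.1 p.2).1
    linarith

lemma zeta_step (n : ℕ) (H : ℕ → ℕ → ℝ) (hmono : ArrayMono H) (J : ℝ) :
    zetaN n (soPhi n H (H (n+1) n)) J - (2 * H (n+2) (n+1) - H (n+1) n - H 1 0) / 2 ^ n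
        ≤ zetaN (n+1) (soPhi (n+1) H (H (n+2) (n+1))) J ∧
      zetaN (n+1) (soPhi (n+1) H (H (n+2) (n+1))) J ≤ zetaN n (soPhi n H (H (n+1) n)) J := by
  obtain ⟨hlo, hhi⟩ := Z_step n H hmono J
  have hZ := Z_pos n (soPhi n H (H (n+1) n)) J
  have hZ' := Z_pos (n+1) (soPhi (n+1) H (H (n+2) (n+1))) J
  have hlog_hi : Real.log (Z (n+1) (soPhi (n+1) H (H (n+2) (n+1))) J)
      ≤ 2 * Real.log (Z n (soPhi n H (H (n+1) n)) J) := by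
    have := (Real.log_le_log_iff hZ' (by positivity)).mpr hhi
    rwa [Real.log_mul (ne_of_gt hZ) (ne_of_gt hZ), ← two_mul] at this
  have hlog_lo : -2 * (2 * H (n+2) (n+1) - H (n+1) n - H 1 0)
        + 2 * Real.log (Z n (soPhi n H (H (n+1) n)) J)
      ≤ Real.log (Z (n+1) (soPhi (n+1) H (H (n+2) (n+1))) J) := by
    have := (Real.log_le_log_iff (by positivity) hZ').mpr hlo
    rwa [Real.log_mul (ne_of_gt (Real.exp_pos _)) (by positivity), Real.log_exp,
      Real.log_mul (ne_of_gt hZ) (ne_of_gt hZ), ← two_mul] at this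
  rw [zetaN, zetaN]
  have h2n : (0:ℝ) < 2 ^ n := by positivity
  have h2n' : (0:ℝ) < 2 ^ (n+1) := by positivity
  have hpow : (2:ℝ) ^ (n+1) = 2 * 2 ^ n := by ring
  set x := Real.log (Z n (soPhi n H (H (n+1) n)) J) with hx
  set y := Real.log (Z (n+1) (soPhi (n+1) H (H (n+2) (n+1))) J) with hy
  set d := 2 * H (n+2) (n+1) - H (n+1) n - H 1 0 with hd
  constructor
  · rw [← sub_div, div_le_div_iff₀ h2n h2n', hpow]
    calc (x - d) * (2 * 2 ^ n) = (-2 * d + 2 * x) * 2 ^ n := by ring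
      _ ≤ y * 2 ^ n := mul_le_mul_of_nonneg_right hlog_lo h2n.le
  · rw [div_le_div_iff₀ h2n' h2n, hpow]
    calc y * 2 ^ n ≤ (2 * x) * 2 ^ n := mul_le_mul_of_nonneg_right hlog_hi h2n.le
      _ = x * (2 * 2 ^ n) := by ring

lemma delta_summable (H : ℕ → ℕ → ℝ)
    (hsum : Summable fun k : ℕ => H (k + 1) k / 2 ^ (k + 1)) :
    Summable fun n : ℕ => (2 * H (n+2) (n+1) - H (n+1) n - H 1 0) / 2 ^ n := by
  have s2 : Summable fun n : ℕ => H (n+2) (n+1) / 2 ^ (n+2) := by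
    have h := hsum.comp_injective (add_left_injective 1)
    exact h
  have s3 : Summable fun n : ℕ => H 1 0 * (1/2 : ℝ) ^ n :=
    (summable_geometric_of_lt_one (by norm_num) (by norm_num)).mul_left _
  have heq : ∀ n : ℕ, (2 * H (n+2) (n+1) - H (n+1) n - H 1 0) / 2 ^ n
      = 8 * (H (n+2) (n+1) / 2 ^ (n+2)) - 2 * (H (n+1) n / 2 ^ (n+1)) - H 1 0 * (1/2) ^ n := by
    intro n
    have h2 : (2:ℝ) ^ n ≠ 0 := by positivity
    rw [one_div, inv_pow]
    field_simp
    ring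
  exact Summable.congr (((s2.mul_left 8).sub (hsum.mul_left 2)).sub s3) (fun n => (heq n).symm)

theorem stmt12' (H : ℕ → ℕ → ℝ) (hmono : ArrayMono H)
    (hsum : Summable fun k : ℕ => H (k + 1) k / 2 ^ (k + 1)) :
    ∃ ζ : ℝ → ℝ, ∀ J : ℝ,
      Tendsto (fun n => zetaN n (soPhi n H (H (n + 1) n)) J) atTop (nhds (ζ J)) := by
  refine ⟨fun J => ⨅ n, zetaN n (soPhi n H (H (n + 1) n)) J, fun J => ?_⟩
  set g := fun n => zetaN n (soPhi n H (H (n + 1) n)) J with hg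
  set d := fun n : ℕ => (2 * H (n+2) (n+1) - H (n+1) n - H 1 0) / 2 ^ n with hd
  have hd_nonneg : ∀ n, 0 ≤ d n := by
    intro n
    have h1 : H (n+1) n ≤ H (n+2) (n+1) :=
      hmono _ _ _ _ (by omega) (by omega) (by omega) (by omega)
    have h2 : H 1 0 ≤ H (n+2) (n+1) :=
      hmono _ _ _ _ (by omega) (by omega) (by omega) (by omega)
    have : (0:ℝ) < 2 ^ n := by positivity
    apply div_nonneg _ this.le
    linarith
  have hstep : ∀ n, g n - d n ≤ g (n+1) ∧ g (n+1) ≤ g n := fun n => zeta_step n H hmono J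
  have hanti : Antitone g := antitone_nat_of_succ_le (fun n => (hstep n).2)
  have hsummd : Summable d := delta_summable H hsum
  have hlb : ∀ n, g 0 - ∑' m, d m ≤ g n := by
    have key : ∀ n, g 0 ≤ g n + ∑ m ∈ Finset.range n, d m := by
      intro n
      induction n with
      | zero => simp
      | succ n ih =>
        rw [Finset.sum_range_succ]
        have := (hstep n).1
        linarith
    intro n
    have h1 := key n
    have h2 : ∑ m ∈ Finset.range n, d m ≤ ∑' m, d m :=
      Summable.sum_le_tsum _ (fun m _ => hd_nonneg m) hsummd
    linarith
  have hbdd : BddBelow (Set.range g) := by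
    refine ⟨g 0 - ∑' m, d m, ?_⟩
    rintro x ⟨n, rfl⟩
    exact hlb n
  exact tendsto_atTop_ciInf hanti hbdd

/-- Proposition 1.18: for a non-decreasing triangular array
`(h_{k,ℓ})_{0≤ℓ<k}` with `∑_k 2⁻ᵏ h_{k,k-1} < ∞` and the second order branching
clustering functions `Φ_n` (with `h = h_{n+1,n}`), the free energy
`ζ(J) = lim_n 2⁻ⁿ ln Z_n^{Φ_n,J}` exists and is finite for every `J ∈ ℝ`. -/
theorem stmt12 (H : ℕ → ℕ → ℝ) (hmono : ArrayMono H)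
    (hsum : Summable fun k : ℕ => H (k + 1) k / 2 ^ (k + 1)) :
    ∃ ζ : ℝ → ℝ, ∀ J : ℝ,
      Tendsto (fun n => zetaN n (soPhi n H (H (n + 1) n)) J) atTop (nhds (ζ J)) := by
  exact stmt12' H hmono hsum

end PWC
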